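/- Suppose lim a_{n+1}/a_n = η with 1 < η < ∞. For any v̂ ∈ [1, η), if θ lies in [0, max{1, 1/(η−v̂)}) or in ((η^l − 1)/v̂, η^l) for some positive integer l, then the set {ξ : v̂_{b,A}(ξ) ≥ v̂ and v_{b,A}(ξ) = θv̂} is empty. -/

import Mathlib

open Filter MeasureTheory Set

/-- Distance to the nearest integer. -/
noncomputable def dni (x : ℝ) : ℝ := |x - round x|

/-- Asymptotic approximation exponent `v_{b,A}(ξ)` (valued in `EReal`). -/
noncomputable def vbA (b : ℕ) (a : ℕ → ℕ) (ξ : ℝ) : EReal :=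
  sSup ((fun v : ℝ => (v : EReal)) ''
    {v : ℝ | 0 ≤ v ∧ ∃ᶠ n in atTop, 1 ≤ n ∧
      dni ((b : ℝ) ^ (a n) * ξ) < (b : ℝ) ^ (-(a n : ℝ) * v)})

/-- Uniform approximation exponent `v̂_{b,A}(ξ)` (valued in `EReal`). -/
noncomputable def vhatbA (b : ℕ) (a : ℕ → ℕ) (ξ : ℝ) : EReal :=
  sSup ((fun v : ℝ => (v : EReal)) ''
    {v : ℝ | 0 ≤ v ∧ ∀ᶠ N in atTop, ∃ n, 1 ≤ n ∧ n ≤ N ∧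
      dni ((b : ℝ) ^ (a n) * ξ) < (b : ℝ) ^ (-(a N : ℝ) * v)})

lemma dni_nonneg (x : ℝ) : 0 ≤ dni x := abs_nonneg _

lemma dni_le_half (x : ℝ) : dni x ≤ 1 / 2 := abs_sub_round x

/-- Key dichotomy: two dyadic-type approximants either coincide (linked) or are
separated by `b^(-t)`. Stated in cleared-denominator form. -/
lemma key_pair (b : ℕ) (hb : 2 ≤ b) (ξ : ℝ) (s t : ℕ) (hst : s ≤ t) :
    (dni ((b:ℝ)^s * ξ) * (b:ℝ)^t = dni ((b:ℝ)^t * ξ) * (b:ℝ)^s) ∨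
    ((b:ℝ)^s ≤ dni ((b:ℝ)^s * ξ) * (b:ℝ)^t + dni ((b:ℝ)^t * ξ) * (b:ℝ)^s) := by
  have hb0 : (0:ℝ) < (b:ℝ) := by positivity
  set p := round ((b:ℝ)^s * ξ) with hp
  set q := round ((b:ℝ)^t * ξ) with hq
  have hbt : ((b:ℝ))^t = (b:ℝ)^s * (b:ℝ)^(t-s) := by
    rw [← pow_add]; congr 1; omega
  by_cases hpq : p * (b:ℤ)^(t-s) = q
  · left
    have hqr : (q:ℝ) = (p:ℝ) * (b:ℝ)^(t-s) := by exact_mod_cast hpq.symm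
    have hkey : ((b:ℝ)^s * ξ - p) * (b:ℝ)^t = ((b:ℝ)^t * ξ - q) * (b:ℝ)^s := by
      rw [hqr, hbt]; ring
    have e1 : dni ((b:ℝ)^s * ξ) * (b:ℝ)^t = |((b:ℝ)^s * ξ - p) * (b:ℝ)^t| := by
      rw [abs_mul, abs_of_nonneg (by positivity : (0:ℝ) ≤ (b:ℝ)^t)]; rfl
    have e2 : dni ((b:ℝ)^t * ξ) * (b:ℝ)^s = |((b:ℝ)^t * ξ - q) * (b:ℝ)^s| := by
      rw [abs_mul, abs_of_nonneg (by positivity : (0:ℝ) ≤ (b:ℝ)^s)]; rfl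
    rw [e1, e2, hkey]
  · right
    have hne : q - p * (b:ℤ)^(t-s) ≠ 0 := by
      intro h; exact hpq (by omega)
    have h1 : (1:ℝ) ≤ |(q:ℝ) - (p:ℝ) * (b:ℝ)^(t-s)| := by
      calc (1:ℝ) ≤ |((q - p * (b:ℤ)^(t-s) : ℤ) : ℝ)| := by
            exact_mod_cast Int.one_le_abs hne
        _ = |(q:ℝ) - (p:ℝ) * (b:ℝ)^(t-s)| := by push_cast; ring_nf
    have h2 : (b:ℝ)^s ≤ |(q:ℝ) * (b:ℝ)^s - (p:ℝ) * (b:ℝ)^t| := by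
      calc (b:ℝ)^s = 1 * (b:ℝ)^s := (one_mul _).symm
        _ ≤ |(q:ℝ) - (p:ℝ) * (b:ℝ)^(t-s)| * (b:ℝ)^s := by
            apply mul_le_mul_of_nonneg_right h1 (by positivity)
        _ = |((q:ℝ) - (p:ℝ) * (b:ℝ)^(t-s)) * (b:ℝ)^s| := by
            rw [abs_mul, abs_of_nonneg (by positivity : (0:ℝ) ≤ (b:ℝ)^s)]
        _ = |(q:ℝ) * (b:ℝ)^s - (p:ℝ) * (b:ℝ)^t| := by rw [hbt]; ring_nf
    have h3 : (q:ℝ) * (b:ℝ)^s - (p:ℝ) * (b:ℝ)^t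
        = ((b:ℝ)^s * ξ - p) * (b:ℝ)^t - ((b:ℝ)^t * ξ - q) * (b:ℝ)^s := by ring
    calc (b:ℝ)^s ≤ |(q:ℝ) * (b:ℝ)^s - (p:ℝ) * (b:ℝ)^t| := h2
      _ ≤ |((b:ℝ)^s * ξ - p) * (b:ℝ)^t| + |((b:ℝ)^t * ξ - q) * (b:ℝ)^s| := by
          rw [h3]; exact abs_sub _ _
      _ = dni ((b:ℝ)^s * ξ) * (b:ℝ)^t + dni ((b:ℝ)^t * ξ) * (b:ℝ)^s := by
          rw [abs_mul, abs_mul, abs_of_nonneg (by positivity : (0:ℝ) ≤ (b:ℝ)^t),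
            abs_of_nonneg (by positivity : (0:ℝ) ≤ (b:ℝ)^s)]; rfl

/-- If some `b^(a n) ξ` is an integer then `vbA` is `⊤`, hence not a real. -/
lemma dpos (b : ℕ) (hb : 2 ≤ b) (a : ℕ → ℕ) (ha : StrictMono a) (ξ v : ℝ) (hv : 0 ≤ v)
    (h : vbA b a ξ = ((v:ℝ):EReal)) (n : ℕ) : 0 < dni ((b:ℝ)^(a n) * ξ) := by
  rcases (dni_nonneg ((b:ℝ)^(a n) * ξ)).lt_or_eq with h0 | h0
  · exact h0
  exfalso
  obtain ⟨k, hk⟩ : ∃ k : ℤ, (b:ℝ)^(a n) * ξ = (k:ℝ) := by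
    refine ⟨round ((b:ℝ)^(a n) * ξ), ?_⟩
    have := abs_eq_zero.mp h0.symm
    linarith [this]
  have hmem : (v+1) ∈ {u : ℝ | 0 ≤ u ∧ ∃ᶠ m in atTop, 1 ≤ m ∧
      dni ((b : ℝ) ^ (a m) * ξ) < (b : ℝ) ^ (-(a m : ℝ) * u)} := by
    refine ⟨by linarith, frequently_atTop.mpr fun M => ?_⟩
    set m := max (max M n) 1 with hm
    have hnm : n ≤ m := le_max_of_le_left (le_max_right _ _)
    refine ⟨m, le_max_of_le_left (le_max_left _ _), le_max_right _ _, ?_⟩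
    have hzero : dni ((b:ℝ)^(a m) * ξ) = 0 := by
      have hsplit : (b:ℝ)^(a m) * ξ = ((b:ℝ)^(a m - a n)) * ((b:ℝ)^(a n) * ξ) := by
        rw [← mul_assoc, ← pow_add]
        congr 2
        have := ha.monotone hnm
        omega
      have hint : (b:ℝ)^(a m) * ξ = (((b:ℤ)^(a m - a n) * k : ℤ) : ℝ) := by
        rw [hsplit, hk]; push_cast; ring
      rw [hint]
      unfold dni
      rw [round_intCast]
      simp
    rw [hzero]
    have hb0 : (0:ℝ) < (b:ℝ) := by positivity
    positivity
  have hle : (((v+1:ℝ)):EReal) ≤ vbA b a ξ :=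
    le_sSup (Set.mem_image_of_mem (fun u : ℝ => (u : EReal)) hmem)
  rw [h] at hle
  have : v + 1 ≤ v := EReal.coe_le_coe_iff.mp hle
  linarith

lemma unif_ev (b : ℕ) (hb : 2 ≤ b) (a : ℕ → ℕ) (ξ w : ℝ)
    (h : (w:EReal) ≤ vhatbA b a ξ) (u : ℝ) (hu0 : 0 ≤ u) (huw : u < w) :
    ∀ᶠ N in atTop, ∃ n, 1 ≤ n ∧ n ≤ N ∧
      dni ((b:ℝ)^(a n) * ξ) < (b:ℝ) ^ (-(a N : ℝ) * u) := by
  have hb1 : (1:ℝ) < (b:ℝ) := by exact_mod_cast hb.trans_lt' one_lt_two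
  have hlt : ((u:ℝ):EReal) < vhatbA b a ξ :=
    lt_of_lt_of_le (EReal.coe_lt_coe_iff.mpr huw) h
  obtain ⟨y, ⟨u', hu', rfl⟩, hy⟩ := lt_sSup_iff.mp hlt
  have huu' : u ≤ u' := (EReal.coe_lt_coe_iff.mp hy).le
  filter_upwards [hu'.2] with N hN
  obtain ⟨n, h1, h2, h3⟩ := hN
  refine ⟨n, h1, h2, h3.trans_le (Real.rpow_le_rpow_of_exponent_le hb1.le ?_)⟩
  have : (0:ℝ) ≤ (a N : ℝ) := by positivity
  nlinarith

lemma asym_upper (b : ℕ) (a : ℕ → ℕ) (ξ v : ℝ) (h : vbA b a ξ = ((v:ℝ):EReal))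
    (u : ℝ) (hu0 : 0 ≤ u) (hu : v < u) :
    ∀ᶠ n in atTop, (b:ℝ) ^ (-(a n : ℝ) * u) ≤ dni ((b:ℝ)^(a n) * ξ) := by
  by_contra hc
  have hfreq : ∃ᶠ n in atTop, dni ((b:ℝ)^(a n) * ξ) < (b:ℝ) ^ (-(a n : ℝ) * u) :=
    (not_eventually.mp hc).mono fun n hn => not_le.mp hn
  have hmem : u ∈ {u' : ℝ | 0 ≤ u' ∧ ∃ᶠ n in atTop, 1 ≤ n ∧
      dni ((b : ℝ) ^ (a n) * ξ) < (b : ℝ) ^ (-(a n : ℝ) * u')} :=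
    ⟨hu0, (hfreq.and_eventually (eventually_ge_atTop 1)).mono fun n hn => ⟨hn.2, hn.1⟩⟩
  have hle : ((u:ℝ):EReal) ≤ vbA b a ξ :=
    le_sSup (Set.mem_image_of_mem (fun u' : ℝ => (u' : EReal)) hmem)
  rw [h] at hle
  exact absurd (EReal.coe_le_coe_iff.mp hle) (not_le.mpr hu)

lemma asym_freq (b : ℕ) (hb : 2 ≤ b) (a : ℕ → ℕ) (ξ v : ℝ)
    (h : vbA b a ξ = ((v:ℝ):EReal)) (u : ℝ) (hu : u < v) :
    ∃ᶠ n in atTop, dni ((b:ℝ)^(a n) * ξ) < (b:ℝ) ^ (-(a n : ℝ) * u) := by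
  have hb1 : (1:ℝ) < (b:ℝ) := by exact_mod_cast hb.trans_lt' one_lt_two
  have hlt : ((u:ℝ):EReal) < vbA b a ξ := by
    rw [h]; exact_mod_cast hu
  obtain ⟨y, ⟨u', hu', rfl⟩, hy⟩ := lt_sSup_iff.mp hlt
  have huu' : u ≤ u' := (EReal.coe_lt_coe_iff.mp hy).le
  refine hu'.2.mono fun n hn => hn.2.trans_le (Real.rpow_le_rpow_of_exponent_le hb1.le ?_)
  have : (0:ℝ) ≤ (a n : ℝ) := by positivity
  nlinarith

lemma rpow_tendsto_zero (b : ℕ) (hb : 2 ≤ b) (a : ℕ → ℕ) (ha : StrictMono a)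
    (u : ℝ) (hu : 0 < u) :
    Tendsto (fun N => (b:ℝ) ^ (-(a N : ℝ) * u)) atTop (nhds 0) := by
  have hb1 : (1:ℝ) < (b:ℝ) := by exact_mod_cast hb.trans_lt' one_lt_two
  have hA : Tendsto (fun N => (a N : ℝ)) atTop atTop :=
    tendsto_natCast_atTop_atTop.comp ha.tendsto_atTop
  have h1 : Tendsto (fun N => -(a N : ℝ) * u) atTop atBot := by
    have := hA.atTop_mul_const hu
    rw [show (fun N => -(a N : ℝ) * u) = (fun x => -x) ∘ (fun N => (a N : ℝ) * u) by
      funext N; simp [neg_mul]]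
    exact tendsto_neg_atBot_iff.mpr this
  exact (tendsto_rpow_atBot_of_base_gt_one _ hb1).comp h1

lemma F1 (b : ℕ) (hb : 2 ≤ b) (a : ℕ → ℕ) (ha : StrictMono a) (ξ w v : ℝ)
    (hw1 : 1 ≤ w) (hξ1 : (w:EReal) ≤ vhatbA b a ξ) (hv0 : 0 ≤ v)
    (hξ2 : vbA b a ξ = ((v:ℝ):EReal)) : w ≤ v := by
  by_contra hvw
  push_neg at hvw
  set u := (v + w)/2 with hu
  have hu0 : 0 < u := by simp only [hu]; linarith
  have huv : v < u := by simp only [hu]; linarith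
  have huw : u < w := by simp only [hu]; linarith
  have hmem : u ∈ {u' : ℝ | 0 ≤ u' ∧ ∃ᶠ n in atTop, 1 ≤ n ∧
      dni ((b : ℝ) ^ (a n) * ξ) < (b : ℝ) ^ (-(a n : ℝ) * u')} := by
    refine ⟨hu0.le, frequently_atTop.mpr fun M => ?_⟩
    obtain ⟨M₁, hM₁⟩ := eventually_atTop.mp (unif_ev b hb a ξ w hξ1 u hu0.le huw)
    obtain ⟨δ, hδ0, hδ⟩ : ∃ δ > 0, ∀ j ≤ M, δ ≤ dni ((b:ℝ)^(a j) * ξ) := by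
      obtain ⟨j₀, _, hj₀⟩ := Finset.exists_min_image (Finset.range (M+1))
        (fun j => dni ((b:ℝ)^(a j) * ξ)) ⟨0, by simp⟩
      exact ⟨_, dpos b hb a ha ξ v hv0 hξ2 j₀,
        fun j hj => hj₀ j (Finset.mem_range.mpr (by omega))⟩
    obtain ⟨N, hN1, hN2⟩ := (((rpow_tendsto_zero b hb a ha u hu0).eventually
      (eventually_lt_nhds hδ0)).and (eventually_ge_atTop (max M₁ M))).exists
    obtain ⟨n, hn1, hnN, hnd⟩ := hM₁ N (le_trans (le_max_left _ _) hN2)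
    have hb1 : (1:ℝ) < (b:ℝ) := by exact_mod_cast hb.trans_lt' one_lt_two
    have hMn : M ≤ n := by
      by_contra hMn
      push_neg at hMn
      exact absurd (hδ n (by omega)) (not_le.mpr (hnd.trans hN1))
    refine ⟨n, hMn, hn1, hnd.trans_le (Real.rpow_le_rpow_of_exponent_le hb1.le ?_)⟩
    have hmono : (a n : ℝ) ≤ (a N : ℝ) := by exact_mod_cast ha.monotone hnN
    nlinarith [mul_le_mul_of_nonneg_right hmono hu0.le]
  have hle : ((u:ℝ):EReal) ≤ vbA b a ξ :=
    le_sSup (Set.mem_image_of_mem (fun u' : ℝ => (u' : EReal)) hmem)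
  rw [hξ2] at hle
  exact absurd (EReal.coe_le_coe_iff.mp hle) (not_le.mpr huv)

set_option maxHeartbeats 2000000 in
lemma F2 (b : ℕ) (hb : 2 ≤ b) (a : ℕ → ℕ) (ha : StrictMono a) (hpos : ∀ n, 1 ≤ a n)
    (η : ℝ) (hη1 : 1 < η)
    (hη : Tendsto (fun n => (a (n + 1) : ℝ) / (a n : ℝ)) atTop (nhds η))
    (ξ w v : ℝ) (hw1 : 1 ≤ w)
    (hξ1 : (w:EReal) ≤ vhatbA b a ξ) (hv0 : 0 ≤ v) (hwv : w ≤ v)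
    (hξ2 : vbA b a ξ = ((v:ℝ):EReal))
    (l : ℕ) (hl : 1 ≤ l) (hc1 : η ^ l - 1 < v) (hc2 : v < η ^ l * w) : False := by
  have hb1 : (1:ℝ) < (b:ℝ) := by exact_mod_cast hb.trans_lt' one_lt_two
  have hb0 : (0:ℝ) < (b:ℝ) := zero_lt_one.trans hb1
  have hb2 : (2:ℝ) ≤ (b:ℝ) := by exact_mod_cast hb
  have hv1 : 1 ≤ v := hw1.trans hwv
  have hApos : ∀ k, (0:ℝ) < (a k : ℝ) := fun k => by exact_mod_cast hpos k
  -- choose ε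
  obtain ⟨ε, hε0, hε12, hεη, he3, he4, he5⟩ :
      ∃ ε : ℝ, 0 < ε ∧ ε < 1/2 ∧ ε < η - 1 ∧
        1 + v + ε < (η - ε) * (1 + v - ε) ∧
        (η + ε) ^ l + 2*ε < 1 + v ∧
        (η + ε) * (v + 2*ε) < (η - ε) ^ (l+1) * (w - ε) := by
    have t3 : Tendsto (fun ε : ℝ => (η - ε) * (1 + v - ε) - (1 + v + ε)) (nhds 0)
        (nhds ((η - 0) * (1 + v - 0) - (1 + v + 0))) := by
      apply Continuous.tendsto; fun_prop
    have p3 : (0:ℝ) < (η - 0) * (1 + v - 0) - (1 + v + 0) := by nlinarith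
    have e3 := t3.eventually (eventually_gt_nhds p3)
    have t4 : Tendsto (fun ε : ℝ => (1 + v) - ((η + ε) ^ l + 2*ε)) (nhds 0)
        (nhds ((1 + v) - ((η + 0) ^ l + 2*0))) := by
      apply Continuous.tendsto; fun_prop
    have p4 : (0:ℝ) < (1 + v) - ((η + 0) ^ l + 2*0) := by
      simp only [add_zero, mul_zero]; linarith
    have e4 := t4.eventually (eventually_gt_nhds p4)
    have t5 : Tendsto (fun ε : ℝ => (η - ε)^(l+1) * (w - ε) - (η + ε) * (v + 2*ε)) (nhds 0)
        (nhds ((η - 0)^(l+1) * (w - 0) - (η + 0) * (v + 2*0))) := by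
      apply Continuous.tendsto; fun_prop
    have p5 : (0:ℝ) < (η - 0)^(l+1) * (w - 0) - (η + 0) * (v + 2*0) := by
      simp only [sub_zero, add_zero, mul_zero]
      have hps : η^(l+1) = η^l * η := pow_succ η l
      nlinarith [mul_lt_mul_of_pos_left hc2 (zero_lt_one.trans hη1)]
    have e5 := t5.eventually (eventually_gt_nhds p5)
    have e1 : ∀ᶠ ε : ℝ in nhds 0, ε < 1/2 := eventually_lt_nhds (by norm_num)
    have e2 : ∀ᶠ ε : ℝ in nhds 0, ε < η - 1 := eventually_lt_nhds (by linarith)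
    have hall := (((e1.and (e2.and (e3.and (e4.and e5)))).filter_mono
      (nhdsWithin_le_nhds (s := Set.Ioi (0:ℝ)))).and eventually_mem_nhdsWithin).exists
    obtain ⟨ε, ⟨h1, h2, h3, h4, h5⟩, h0⟩ := hall
    exact ⟨ε, h0, h1, h2, by linarith, by linarith, by linarith⟩
  -- thresholds
  obtain ⟨M₁, hM₁⟩ := eventually_atTop.mp
    (unif_ev b hb a ξ w hξ1 (w - ε) (by linarith) (by linarith))
  obtain ⟨M₂, hM₂⟩ := eventually_atTop.mp
    (asym_upper b a ξ v hξ2 (v + ε) (by linarith) (by linarith))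
  have hratio : ∀ᶠ k in atTop,
      (η - ε) * (a k : ℝ) < (a (k+1) : ℝ) ∧ (a (k+1) : ℝ) < (η + ε) * (a k : ℝ) := by
    have h1 := hη.eventually (eventually_gt_nhds (show η - ε < η by linarith))
    have h2 := hη.eventually (eventually_lt_nhds (show η < η + ε by linarith))
    filter_upwards [h1, h2] with k h1 h2
    have hA := hApos k
    exact ⟨(lt_div_iff₀ hA).mp h1, (div_lt_iff₀ hA).mp h2⟩
  obtain ⟨M₃, hM₃⟩ := eventually_atTop.mp hratio
  set M₀ := M₁ + M₂ + M₃ + 1 with hM₀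
  obtain ⟨δ, hδ0, hδ⟩ : ∃ δ > 0, ∀ j ≤ M₀, δ ≤ dni ((b:ℝ)^(a j)*ξ) := by
    obtain ⟨j₀, _, hj₀⟩ := Finset.exists_min_image (Finset.range (M₀+1))
      (fun j => dni ((b:ℝ)^(a j) * ξ)) ⟨0, by simp⟩
    exact ⟨_, dpos b hb a ha ξ v hv0 hξ2 j₀,
      fun j hj => hj₀ j (Finset.mem_range.mpr (by omega))⟩
  -- ratio chain bounds
  have hup : ∀ k, M₃ ≤ k → ∀ j, (a (k+j):ℝ) ≤ (η+ε)^j * (a k:ℝ) := by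
    intro k hk j
    induction j with
    | zero => simp
    | succ j ih =>
      have h := (hM₃ (k+j) (by omega)).2
      have e : (a (k+(j+1)):ℝ) = (a ((k+j)+1):ℝ) := rfl
      have : (a (k+(j+1)):ℝ) < (η+ε)^(j+1) * (a k:ℝ) := by
        rw [e]
        calc (a ((k+j)+1):ℝ) < (η+ε)*(a (k+j):ℝ) := h
          _ ≤ (η+ε)*((η+ε)^j * (a k:ℝ)) :=
              mul_le_mul_of_nonneg_left ih (by linarith)
          _ = (η+ε)^(j+1) * (a k:ℝ) := by ring
      exact this.le
  have hlow : ∀ k, M₃ ≤ k → ∀ j, (η-ε)^j * (a k:ℝ) ≤ (a (k+j):ℝ) := by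
    intro k hk j
    induction j with
    | zero => simp
    | succ j ih =>
      have h := (hM₃ (k+j) (by omega)).1
      have e : (a (k+(j+1)):ℝ) = (a ((k+j)+1):ℝ) := rfl
      have : (η-ε)^(j+1) * (a k:ℝ) < (a (k+(j+1)):ℝ) := by
        rw [e]
        calc (η-ε)^(j+1) * (a k:ℝ) = (η-ε)*((η-ε)^j * (a k:ℝ)) := by ring
          _ ≤ (η-ε)*(a (k+j):ℝ) := mul_le_mul_of_nonneg_left ih (by linarith)
          _ < (a ((k+j)+1):ℝ) := h
      exact this.le
  -- choose a good index n
  have hev : ∀ᶠ n in atTop, M₀ + 1 ≤ n ∧ 1 ≤ ε * (a n:ℝ) ∧ (b:ℝ)^(-(a n:ℝ) * 1) < δ := by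
    have hA : Tendsto (fun n => (a n:ℝ)) atTop atTop :=
      tendsto_natCast_atTop_atTop.comp ha.tendsto_atTop
    have g1 : ∀ᶠ n in atTop, (1/ε : ℝ) ≤ (a n:ℝ) := hA.eventually (eventually_ge_atTop _)
    have g2 := (rpow_tendsto_zero b hb a ha 1 one_pos).eventually (eventually_lt_nhds hδ0)
    filter_upwards [eventually_ge_atTop (M₀+1), g1, g2] with n p1 p2 p3
    refine ⟨p1, ?_, p3⟩
    have := (div_le_iff₀ hε0).mp p2
    linarith
  obtain ⟨n, hdn, hnM, hεn, hbn⟩ :=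
    ((asym_freq b hb a ξ v hξ2 (v - ε) (by linarith)).and_eventually hev).exists
  -- define N
  have hA : Tendsto (fun k => (a k:ℝ)) atTop atTop :=
    tendsto_natCast_atTop_atTop.comp ha.tendsto_atTop
  have hNex : ∃ N, (a n:ℝ)*(v+ε) + 1 < (a N:ℝ)*(w-ε) := by
    obtain ⟨N, hN⟩ := (hA.eventually
      (eventually_gt_atTop (((a n:ℝ)*(v+ε)+1)/(w-ε)))).exists
    refine ⟨N, ?_⟩
    rw [div_lt_iff₀ (by linarith : (0:ℝ) < w - ε)] at hN
    linarith
  set N := Nat.find hNex with hNdef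
  have hNspec : (a n:ℝ)*(v+ε) + 1 < (a N:ℝ)*(w-ε) := Nat.find_spec hNex
  have hnN : n < N := by
    by_contra hcon
    push_neg at hcon
    have h1 : (a N:ℝ) ≤ (a n:ℝ) := by exact_mod_cast ha.monotone hcon
    nlinarith [hApos n, hApos N]
  have hNmin : (a (N-1):ℝ)*(w-ε) ≤ (a n:ℝ)*(v+ε) + 1 :=
    not_lt.mp (Nat.find_min hNex (show N - 1 < N by omega))
  obtain ⟨m, hm1, hmN, hdm⟩ := hM₁ N (by omega)
  -- basic d-facts
  have hAn := hApos n
  have hdn_low : (b:ℝ)^(-(a n:ℝ)*(v+ε)) ≤ dni ((b:ℝ)^(a n)*ξ) := hM₂ n (by omega)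
  have hdm1 : dni ((b:ℝ)^(a m)*ξ) < (b:ℝ)^(-((a n:ℝ)*(v+ε)+1)) := by
    refine hdm.trans_le (Real.rpow_le_rpow_of_exponent_le hb1.le ?_)
    nlinarith [hNspec]
  have hdmδ : dni ((b:ℝ)^(a m)*ξ) < δ := by
    refine lt_of_lt_of_le (hdm1.trans_le
      (Real.rpow_le_rpow_of_exponent_le hb1.le ?_)) hbn.le
    nlinarith [hAn]
  have hmM₀ : M₀ + 1 ≤ m := by
    by_contra hc
    push_neg at hc
    exact absurd (hδ m (by omega)) (not_le.mpr hdmδ)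
  have hdm_low : (b:ℝ)^(-(a m:ℝ)*(v+ε)) ≤ dni ((b:ℝ)^(a m)*ξ) := hM₂ m (by omega)
  have hdmn : dni ((b:ℝ)^(a m)*ξ) < dni ((b:ℝ)^(a n)*ξ) :=
    hdm1.trans_le (le_trans (Real.rpow_le_rpow_of_exponent_le hb1.le (by nlinarith [hAn])) hdn_low)
  have hmul : ∀ x y : ℝ, (b:ℝ)^x * (b:ℝ)^y = (b:ℝ)^(x+y) :=
    fun x y => (Real.rpow_add hb0 x y).symm
  -- trichotomy
  rcases Nat.lt_trichotomy m n with hmn | heqmn | hmn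
  · -- m < n
    have hamn : a m ≤ a n := (ha hmn).le
    have haml : (a m:ℝ) ≤ (a (n-1):ℝ) := by
      exact_mod_cast ha.monotone (by omega : m ≤ n - 1)
    have hrat : (η - ε) * (a (n-1) : ℝ) < (a n : ℝ) := by
      have h := (hM₃ (n-1) (by omega)).1
      have e : n - 1 + 1 = n := by omega
      rwa [e] at h
    rcases key_pair b hb ξ (a m) (a n) hamn with heq | hsep
    · -- linked, m < n
      have h1 : (b:ℝ)^(-(a m:ℝ)*(v+ε)) * (b:ℝ)^((a n:ℕ):ℝ)
          < (b:ℝ)^(-(a n:ℝ)*(v-ε)) * (b:ℝ)^((a m:ℕ):ℝ) := by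
        calc (b:ℝ)^(-(a m:ℝ)*(v+ε)) * (b:ℝ)^((a n:ℕ):ℝ)
            = (b:ℝ)^(-(a m:ℝ)*(v+ε)) * (b:ℝ)^(a n) := by rw [Real.rpow_natCast]
          _ ≤ dni ((b:ℝ)^(a m)*ξ) * (b:ℝ)^(a n) :=
              mul_le_mul_of_nonneg_right hdm_low (by positivity)
          _ = dni ((b:ℝ)^(a n)*ξ) * (b:ℝ)^(a m) := heq
          _ < (b:ℝ)^(-(a n:ℝ)*(v-ε)) * (b:ℝ)^(a m) :=
              mul_lt_mul_of_pos_right hdn (by positivity)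
          _ = (b:ℝ)^(-(a n:ℝ)*(v-ε)) * (b:ℝ)^((a m:ℕ):ℝ) := by rw [Real.rpow_natCast]
      rw [hmul, hmul] at h1
      have h2 := (Real.rpow_lt_rpow_left_iff hb1).mp h1
      have q1 : (η-ε)*(a m:ℝ) < (a n:ℝ) :=
        lt_of_le_of_lt (mul_le_mul_of_nonneg_left haml (by linarith)) hrat
      have q3 : (a m:ℝ)*(1+v+ε) < (a m:ℝ)*((η-ε)*(1+v-ε)) :=
        mul_lt_mul_of_pos_left he3 (hApos m)
      have q4 : ((η-ε)*(a m:ℝ))*(1+v-ε) < (a n:ℝ)*(1+v-ε) :=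
        mul_lt_mul_of_pos_right q1 (by linarith)
      nlinarith [h2, q3, q4]
    · -- separated, m < n
      have hhalf := dni_le_half ((b:ℝ)^(a n)*ξ)
      have h1 : ((b:ℝ)^(a m):ℝ)/2 ≤ dni ((b:ℝ)^(a m)*ξ) * (b:ℝ)^(a n) := by
        nlinarith [pow_pos hb0 (a m), mul_le_mul_of_nonneg_right hhalf
          (le_of_lt (pow_pos hb0 (a m)))]
      have h2 : (b:ℝ)^(((a m:ℕ):ℝ) - 1) ≤ dni ((b:ℝ)^(a m)*ξ) * (b:ℝ)^((a n:ℕ):ℝ) := by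
        have e : (b:ℝ)^(((a m:ℕ):ℝ) - 1) = (b:ℝ)^((a m:ℕ):ℝ) / (b:ℝ) := by
          rw [Real.rpow_sub hb0, Real.rpow_one]
        rw [e, Real.rpow_natCast, Real.rpow_natCast]
        calc ((b:ℝ)^(a m):ℝ) / (b:ℝ) ≤ ((b:ℝ)^(a m):ℝ)/2 := by
              rw [div_le_div_iff_of_pos_left (by positivity) (by positivity) (by norm_num)]
              exact hb2
          _ ≤ _ := h1
      have h3 : dni ((b:ℝ)^(a m)*ξ) * (b:ℝ)^((a n:ℕ):ℝ)
          < (b:ℝ)^(-((a n:ℝ)*(v+ε)+1) + ((a n:ℕ):ℝ)) := by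
        rw [← hmul]
        exact mul_lt_mul_of_pos_right hdm1 (by positivity)
      have h4 := (Real.rpow_lt_rpow_left_iff hb1).mp (h2.trans_lt h3)
      have hm1' : (1:ℝ) ≤ (a m:ℝ) := by exact_mod_cast hpos m
      nlinarith [mul_nonneg (le_of_lt hAn) (by linarith : (0:ℝ) ≤ v + ε - 1)]
  · -- m = n
    subst heqmn
    exact absurd hdmn (lt_irrefl _)
  · -- n < m
    have hanm : a n ≤ a m := (ha hmn).le
    rcases key_pair b hb ξ (a n) (a m) hanm with heq | hsep
    · -- linked, n < m
      have h1 : dni ((b:ℝ)^(a n)*ξ) * (b:ℝ)^(a m)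
          ≤ dni ((b:ℝ)^(a m)*ξ) * (b:ℝ)^(a m) := by
        rw [heq]
        exact mul_le_mul_of_nonneg_left (pow_le_pow_right₀ hb1.le hanm) (dni_nonneg _)
      have h2 := le_of_mul_le_mul_right h1 (pow_pos hb0 (a m))
      exact absurd hdmn (not_lt.mpr h2)
    · -- separated, n < m: the main case
      have hhalf := dni_le_half ((b:ℝ)^(a m)*ξ)
      have h1 : ((b:ℝ)^(a n):ℝ)/2 ≤ dni ((b:ℝ)^(a n)*ξ) * (b:ℝ)^(a m) := by
        nlinarith [pow_pos hb0 (a n), mul_le_mul_of_nonneg_right hhalf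
          (le_of_lt (pow_pos hb0 (a n)))]
      have h2 : (b:ℝ)^(((a n:ℕ):ℝ) - 1) ≤ dni ((b:ℝ)^(a n)*ξ) * (b:ℝ)^((a m:ℕ):ℝ) := by
        have e : (b:ℝ)^(((a n:ℕ):ℝ) - 1) = (b:ℝ)^((a n:ℕ):ℝ) / (b:ℝ) := by
          rw [Real.rpow_sub hb0, Real.rpow_one]
        rw [e, Real.rpow_natCast, Real.rpow_natCast]
        calc ((b:ℝ)^(a n):ℝ) / (b:ℝ) ≤ ((b:ℝ)^(a n):ℝ)/2 := by
              rw [div_le_div_iff_of_pos_left (by positivity) (by positivity) (by norm_num)]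
              exact hb2
          _ ≤ _ := h1
      have h3 : dni ((b:ℝ)^(a n)*ξ) * (b:ℝ)^((a m:ℕ):ℝ)
          < (b:ℝ)^(-(a n:ℝ)*(v-ε) + ((a m:ℕ):ℝ)) := by
        rw [← hmul]
        exact mul_lt_mul_of_pos_right hdn (by positivity)
      have h4 := (Real.rpow_lt_rpow_left_iff hb1).mp (h2.trans_lt h3)
      -- h4 : a n - 1 < -(a n)(v-ε) + a m, so a m > a n (1+v-ε) - 1 ≥ a n (1+v-2ε)
      have hlower : (a n:ℝ)*(1+v-2*ε) < (a m:ℝ) := by nlinarith [hεn]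
      -- upper bound: a m (w-ε) ≤ (η+ε) a n (v+2ε)
      have hratN : (a N : ℝ) < (η + ε) * (a (N-1) : ℝ) := by
        have h := (hM₃ (N-1) (by omega)).2
        have e : N - 1 + 1 = N := by omega
        rwa [e] at h
      have hamN : (a m:ℝ) ≤ (a N:ℝ) := by exact_mod_cast ha.monotone hmN
      have hupper : (a m:ℝ)*(w-ε) ≤ (η+ε)*((a n:ℝ)*(v+2*ε)) := by
        have hn1 : (a n:ℝ)*(v+ε) + 1 ≤ (a n:ℝ)*(v+2*ε) := by nlinarith [hεn]
        have hη0 : (0:ℝ) < η + ε := by linarith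
        have hw0 : (0:ℝ) < w - ε := by linarith
        nlinarith [mul_le_mul_of_nonneg_left (hNmin.trans hn1) hη0.le,
          mul_le_mul_of_nonneg_right hamN hw0.le,
          mul_lt_mul_of_pos_right hratN hw0]
      -- split on j = m - n vs l
      have hmeq : m = n + (m - n) := by omega
      by_cases hj : m - n ≤ l
      · have hub := hup n (by omega) (m - n)
        rw [← hmeq] at hub
        have hpowle : (η+ε)^(m-n) ≤ (η+ε)^l := by
          apply pow_le_pow_right₀ (by linarith) hj
        have : (a m:ℝ) ≤ (η+ε)^l * (a n:ℝ) :=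
          hub.trans (mul_le_mul_of_nonneg_right hpowle (le_of_lt hAn))
        nlinarith [hAn]
      · have hlb := hlow n (by omega) (m - n)
        rw [← hmeq] at hlb
        have hpowle : (η-ε)^(l+1) ≤ (η-ε)^(m-n) := by
          apply pow_le_pow_right₀ (by linarith) (by omega)
        have hx : (η-ε)^(l+1) * (a n:ℝ) ≤ (a m:ℝ) :=
          le_trans (mul_le_mul_of_nonneg_right hpowle (le_of_lt hAn)) hlb
        have hw0 : (0:ℝ) < w - ε := by linarith
        nlinarith [mul_le_mul_of_nonneg_right hx hw0.le, hAn,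
          mul_lt_mul_of_pos_right he5 hAn]

theorem stmt10 (b : ℕ) (hb : 2 ≤ b) (a : ℕ → ℕ) (ha : StrictMono a)
    (hpos : ∀ n, 1 ≤ a n) (η : ℝ) (hη1 : 1 < η)
    (hη : Tendsto (fun n => (a (n + 1) : ℝ) / (a n : ℝ)) atTop (nhds η))
    (w : ℝ) (hw : w ∈ Set.Ico (1 : ℝ) η) (θ : ℝ)
    (hθ : θ ∈ Set.Ico 0 (max 1 (1 / (η - w))) ∨
      ∃ l : ℕ, 1 ≤ l ∧ θ ∈ Set.Ioo ((η ^ l - 1) / w) (η ^ l)) :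
    {ξ : ℝ | (w : EReal) ≤ vhatbA b a ξ ∧ vbA b a ξ = ((θ * w : ℝ) : EReal)} = ∅ := by
  obtain ⟨hw1, hwη⟩ := hw
  rw [Set.eq_empty_iff_forall_notMem]
  rintro ξ ⟨hξ1, hξ2⟩
  set v := θ * w with hv
  have hw0 : (0:ℝ) < w := by linarith
  have hv0 : 0 ≤ v := by
    rcases hθ with ⟨hθ0, _⟩ | ⟨l, hl, hlo, hhi⟩
    · exact mul_nonneg hθ0 hw0.le
    · have hηl : (1:ℝ) ≤ η ^ l := one_le_pow₀ hη1.le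
      have h0 : (0:ℝ) ≤ (η^l - 1)/w := div_nonneg (by linarith) hw0.le
      nlinarith [lt_of_le_of_lt h0 hlo]
  have hwv : w ≤ v := F1 b hb a ha ξ w v hw1 hξ1 hv0 hξ2
  rcases hθ with ⟨hθ0, hθm⟩ | ⟨l, hl, hlo, hhi⟩
  · have hθ1 : 1 ≤ θ := by
      by_contra hθ1
      push_neg at hθ1
      have : v < w := by nlinarith
      linarith
    have hθlt : θ < 1/(η - w) := by
      rcases max_cases (1:ℝ) (1/(η-w)) with ⟨hmax, _⟩ | ⟨hmax, _⟩ <;> rw [hmax] at hθm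
      · linarith
      · exact hθm
    have hηw : (0:ℝ) < η - w := by linarith
    have hvw : v * (η - w) < w := by
      have h1 : θ * (η - w) < 1 := (lt_div_iff₀ hηw).mp hθlt
      nlinarith
    have hex : ∃ k : ℕ, v < η ^ k * w := by
      obtain ⟨k, hk⟩ := pow_unbounded_of_one_lt (v/w) hη1
      exact ⟨k, by nlinarith [(div_lt_iff₀ hw0).mp hk]⟩
    have hspec : v < η ^ (Nat.find hex) * w := Nat.find_spec hex
    set L := Nat.find hex with hL
    have hL1 : 1 ≤ L := by
      rcases Nat.eq_zero_or_pos L with h0 | h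
      · rw [h0] at hspec; simp at hspec; linarith
      · exact h
    have hmin : η^(L-1) * w ≤ v := not_lt.mp (Nat.find_min hex (show L - 1 < L by omega))
    have hc1 : η ^ L - 1 < v := by
      have he : η ^ L = η * η ^ (L-1) := by
        conv_lhs => rw [show L = (L-1)+1 by omega]
        rw [pow_succ']
      have h1 : η ^ L * w ≤ η * v := by
        rw [he]
        nlinarith [hmin]
      nlinarith
    exact F2 b hb a ha hpos η hη1 hη ξ w v hw1 hξ1 hv0 hwv hξ2 L hL1 hc1 hspec
  · have hc1 : η ^ l - 1 < v := by
      have := (div_lt_iff₀ hw0).mp hlo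
      linarith
    have hc2 : v < η ^ l * w := by nlinarith
    exact F2 b hb a ha hpos η hη1 hη ξ w v hw1 hξ1 hv0 hwv hξ2 l hl hc1 hc2
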